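/- arXiv:1509.08883 — 2 statements merged into one kernel-verified Lean document; each statement's English description precedes it below -/
import Mathlib

section
/- Let G be a countable discrete group, residually finite with respect to a sequence of finite-index normal subgroups G = N₀ ⊇ N₁ ⊇ N₂ ⊇ ⋯ with ⋂_{i≥1} N_i = {1}, equipped with a proper length function and the induced left-invariant metric, each G/N_i carrying the quotient metric. Then G has FDC if and only if there exists an increasing sequence of positive reals r_i with r_i → ∞ such that the coarse disjoint union of the balls B_{G/N_i}(1, r_i) has FDC. -/
open Set Filter
open scoped symmDiff

namespace FDCPaper

/-! ### Proper functions `[0,∞) → ℝ` : preimages of bounded sets are bounded. -/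

def ProperFn (ρ : ℝ → ℝ) : Prop :=
  ∀ C : ℝ, ∃ M : ℝ, ∀ t : ℝ, 0 ≤ t → |ρ t| ≤ C → t ≤ M

/-! ### Length functions on groups and the induced metrics -/

structure IsLengthFunction {G : Type*} [Group G] (l : G → ℝ) : Prop where
  nonneg : ∀ g, 0 ≤ l g
  len_one : l 1 = 0
  len_inv : ∀ g, l g⁻¹ = l g
  subadd : ∀ g h, l (g * h) ≤ l g + l h
  eq_one : ∀ g, l g = 0 → g = 1
  proper : ∀ R : ℝ, {g : G | l g ≤ R}.Finite

/-- The left invariant distance induced by a length function. -/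
def dl {G : Type*} [Group G] (l : G → ℝ) (g h : G) : ℝ := l (g⁻¹ * h)

/-- The quotient distance on `G ⧸ N`:
`d([g],[h]) = inf { d_G(g n₁, h n₂) : n₁, n₂ ∈ N }`. -/
noncomputable def qdist {G : Type*} [Group G] (l : G → ℝ) (N : Subgroup G)
    (x y : G ⧸ N) : ℝ :=
  sInf {r : ℝ | ∃ g h : G, (QuotientGroup.mk g : G ⧸ N) = x ∧
    (QuotientGroup.mk h : G ⧸ N) = y ∧ r = dl l g h}

/-- The quotient length on `G ⧸ N` : `l̄([g]) = inf { l(h) : [h] = [g] }`. -/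
noncomputable def qlen {G : Type*} [Group G] (l : G → ℝ) (N : Subgroup G) (x : G ⧸ N) : ℝ :=
  sInf {r : ℝ | ∃ g : G, (QuotientGroup.mk g : G ⧸ N) = x ∧ r = l g}

/-! ### Families of subsets of a single ambient space, decompositions -/

section Single

variable {α : Type*}

/-- The open ball, for a distance function. -/
def ballS (d : α → α → ℝ) (c : α) (R : ℝ) : Set α := {x | d c x < R}

/-- An `r`-disjoint family of subsets. -/
def rDisjS (d : α → α → ℝ) (r : ℝ) (P : Set (Set α)) : Prop :=
  ∀ A ∈ P, ∀ B ∈ P, A ≠ B → ∀ x ∈ A, ∀ y ∈ B, r ≤ d x y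

/-- A uniformly bounded family of subsets. -/
def BddS (d : α → α → ℝ) (𝒴 : Set (Set α)) : Prop :=
  ∃ C : ℝ, ∀ Y ∈ 𝒴, ∀ x ∈ Y, ∀ y ∈ Y, d x y ≤ C

/-- `X = X₀ ∪ X₁` where each `Xᵢ` is an `r`-disjoint union of members of `𝒴`. -/
def PieceDecomp (d : α → α → ℝ) (r : ℝ) (X : Set α) (𝒴 : Set (Set α)) : Prop :=
  ∃ P₀ P₁ : Set (Set α),
    X = ⋃₀ P₀ ∪ ⋃₀ P₁ ∧ rDisjS d r P₀ ∧ rDisjS d r P₁ ∧ ∀ A ∈ P₀ ∪ P₁, A ∈ 𝒴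

/-- `X = X₀ ∪ X₁`, `Xᵢ = ∪ⱼ Xᵢⱼ` with `Xᵢⱼ ∈ 𝒴`, and the cover `{Xᵢⱼ}` of `X` has
Lebesgue number `≥ R`. -/
def PieceFullDecomp (d : α → α → ℝ) (R : ℝ) (X : Set α) (𝒴 : Set (Set α)) : Prop :=
  ∃ P₀ P₁ : Set (Set α),
    X = ⋃₀ P₀ ∪ ⋃₀ P₁ ∧
    (∀ x ∈ X, ∃ A ∈ P₀ ∪ P₁, {y ∈ X | d x y < R} ⊆ A) ∧
    ∀ A ∈ P₀ ∪ P₁, A ∈ 𝒴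

/-- `𝒳` is `r`-decomposable over `𝒴` (families of subsets of a single space). -/
def DecompS (d : α → α → ℝ) (r : ℝ) (𝒳 𝒴 : Set (Set α)) : Prop :=
  ∀ X ∈ 𝒳, PieceDecomp d r X 𝒴

/-- `𝒳` is `R`-full decomposable over `𝒴`. -/
def FullDecompS (d : α → α → ℝ) (R : ℝ) (𝒳 𝒴 : Set (Set α)) : Prop :=
  ∀ X ∈ 𝒳, PieceFullDecomp d R X 𝒴

/-- Straight finite decomposition complexity of a family of subsets of a space. -/
def sFDCS (d : α → α → ℝ) (𝒳 : Set (Set α)) : Prop :=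
  ∀ R : ℕ → ℝ, (∀ n, 0 < R n) → StrictMono R →
    ∃ (m : ℕ) (𝒴 : ℕ → Set (Set α)), 𝒴 0 = 𝒳 ∧
      (∀ i < m, DecompS d (R i) (𝒴 i) (𝒴 (i + 1))) ∧ BddS d (𝒴 m)

/-- Straight FDC of a metric space, i.e. of the singleton family `{X}`. -/
def SpaceSFDC (d : α → α → ℝ) : Prop := sFDCS d {Set.univ}

end Single

/-! ### General metric families and finite decomposition complexity -/

/-- A metric family, realized as a set of subsets of an indexed collection of spaces
`Z i`, each equipped with its distance function. -/
abbrev Fam {ι : Type*} (Z : ι → Type*) := Set ((i : ι) × Set (Z i))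

section Families

variable {ι : Type*} {Z : ι → Type*}

/-- A (uniformly) bounded metric family. -/
def Bdd (d : ∀ i, Z i → Z i → ℝ) (𝒴 : Fam Z) : Prop :=
  ∃ C : ℝ, ∀ p ∈ 𝒴, ∀ x ∈ p.2, ∀ y ∈ p.2, d p.1 x y ≤ C

/-- The metric family `𝒳` is `r`-decomposable over the metric family `𝒴`. -/
def Decomp (d : ∀ i, Z i → Z i → ℝ) (r : ℝ) (𝒳 𝒴 : Fam Z) : Prop :=
  ∀ p ∈ 𝒳, PieceDecomp (d p.1) r p.2
    {A : Set (Z p.1) | (⟨p.1, A⟩ : (i : ι) × Set (Z i)) ∈ 𝒴}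

/-- The collections `D_α` : `D_0` consists of the bounded families, and for `α > 0`,
`𝒳 ∈ D_α` iff for every `r > 0` there are `β < α` and `𝒴 ∈ D_β` with `𝒳 →_r 𝒴`. -/
def DColl (d : ∀ i, Z i → Z i → ℝ) (α : Ordinal.{0}) : Set (Fam Z) :=
  {𝒳 | (α = 0 ∧ Bdd d 𝒳) ∨
    (α ≠ 0 ∧ ∀ r : ℝ, 0 < r →
      ∃ β : Ordinal.{0}, ∃ _ : β < α, ∃ 𝒴 ∈ DColl d β, Decomp d r 𝒳 𝒴)}
  termination_by α

/-- A metric family has finite decomposition complexity if it belongs to some `D_α`. -/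
def HasFDC (d : ∀ i, Z i → Z i → ℝ) (𝒳 : Fam Z) : Prop :=
  ∃ α : Ordinal.{0}, 𝒳 ∈ DColl d α

end Families

/-- FDC of a single metric space, i.e. of the singleton family `{X}`. -/
def SpaceFDC {X : Type*} (d : X → X → ℝ) : Prop :=
  HasFDC (ι := Unit) (Z := fun _ => X) (fun _ => d) {p | p.2 = Set.univ}

/-! ### Coarse disjoint unions and box spaces -/

/-- The diameter of a space with a distance function. -/
noncomputable def diamD {X : Type*} (d : X → X → ℝ) : ℝ :=
  sSup {r : ℝ | ∃ x y : X, r = d x y}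

/-- The coarse disjoint union distance: each piece keeps its own distance, and
`d(x,y) = diam Xᵢ + diam Xⱼ + i + j` for `x ∈ Xᵢ`, `y ∈ Xⱼ` with `i ≠ j`. -/
noncomputable def cuDist {X : ℕ → Type*} (d : ∀ i, X i → X i → ℝ) :
    (Σ i, X i) → (Σ i, X i) → ℝ := fun x y =>
  if h : x.1 = y.1 then d y.1 (h ▸ x.2) y.2
  else diamD (d x.1) + diamD (d y.1) + (x.1 : ℝ) + (y.1 : ℝ)

/-- The box space `□_{Nᵢ} G` : the coarse disjoint union of the quotients `G ⧸ Nᵢ`. -/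
noncomputable def boxDist {G : Type*} [Group G] (l : G → ℝ) (N : ℕ → Subgroup G) :
    (Σ i, G ⧸ N i) → (Σ i, G ⧸ N i) → ℝ :=
  cuDist (fun i => qdist l (N i))

/-! ### Equivariance -/

section EquivGroup

variable {G : Type*} [Group G]

/-- A family of subsets of `G` is `H`-invariant if it is closed under right
translation by elements of `H`. -/
def RInvFam (H : Subgroup G) (P : Set (Set G)) : Prop :=
  ∀ U ∈ P, ∀ h ∈ H, (fun g => g * h) '' U ∈ P

/-- An `H`-invariant decomposition of a single subset of `G`. -/
def PieceDecompInv (d : G → G → ℝ) (H : Subgroup G) (r : ℝ) (X : Set G)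
    (𝒴 : Set (Set G)) : Prop :=
  ∃ P₀ P₁ : Set (Set G),
    X = ⋃₀ P₀ ∪ ⋃₀ P₁ ∧ rDisjS d r P₀ ∧ rDisjS d r P₁ ∧
    (∀ A ∈ P₀ ∪ P₁, A ∈ 𝒴) ∧ RInvFam H P₀ ∧ RInvFam H P₁

/-- An `H`-invariant decomposition `𝒳 →_r 𝒴` of families of subsets of `G`. -/
def DecompSInv (d : G → G → ℝ) (H : Subgroup G) (r : ℝ) (𝒳 𝒴 : Set (Set G)) : Prop :=
  ∀ X ∈ 𝒳, PieceDecompInv d H r X 𝒴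

/-- An `H`-invariant full decomposition of a single subset of `G`. -/
def PieceFullDecompInv (d : G → G → ℝ) (H : Subgroup G) (R : ℝ) (X : Set G)
    (𝒴 : Set (Set G)) : Prop :=
  ∃ P₀ P₁ : Set (Set G),
    X = ⋃₀ P₀ ∪ ⋃₀ P₁ ∧
    (∀ x ∈ X, ∃ A ∈ P₀ ∪ P₁, {y ∈ X | d x y < R} ⊆ A) ∧
    (∀ A ∈ P₀ ∪ P₁, A ∈ 𝒴) ∧ RInvFam H P₀ ∧ RInvFam H P₁

/-- An `H`-invariant full decomposition `𝒳 ↝_R 𝒴` of families of subsets of `G`. -/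
def FullDecompSInv (d : G → G → ℝ) (H : Subgroup G) (R : ℝ) (𝒳 𝒴 : Set (Set G)) : Prop :=
  ∀ X ∈ 𝒳, PieceFullDecompInv d H R X 𝒴

/-- `G` has equi-variant straight FDC with respect to the sequence `{Nᵢ}` : for any
increasing sequence `R₁ < R₂ < ⋯` of positive reals there are `m`, `K` and a chain
of decompositions `{G} →_{R₁} 𝒴₁ →_{R₂} ⋯ →_{R_m} 𝒴_m` with `𝒴_m` bounded and the
last decomposition `N_K`-invariant. -/
def EquivSFDC (d : G → G → ℝ) (N : ℕ → Subgroup G) : Prop :=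
  ∀ R : ℕ → ℝ, (∀ n, 0 < R n) → StrictMono R →
    ∃ m K : ℕ, 0 < m ∧ ∃ 𝒴 : ℕ → Set (Set G), 𝒴 0 = {Set.univ} ∧
      (∀ i < m, DecompS d (R i) (𝒴 i) (𝒴 (i + 1))) ∧ BddS d (𝒴 m) ∧
      DecompSInv d (N K) (R (m - 1)) (𝒴 (m - 1)) (𝒴 m)

end EquivGroup

/-! ### Stable FDC -/

/-- The distances on the members of the family `{H/K : K ⊴ H ≤ G}` : `H` carries the
metric induced from `G` and `H/K` the corresponding quotient metric. -/
noncomputable def stableD {G : Type*} [Group G] (l : G → ℝ) :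
    ∀ p : Σ H : Subgroup G, Subgroup ↥H, (↥p.1 ⧸ p.2) → (↥p.1 ⧸ p.2) → ℝ :=
  fun p => qdist (fun h : ↥p.1 => l ↑h) p.2

/-- `G` has stable FDC if the family `{H/K : K ⊴ H ≤ G}` has FDC. -/
def StableFDC (G : Type*) [Group G] (l : G → ℝ) : Prop :=
  HasFDC (stableD l)
    {q : (p : Σ H : Subgroup G, Subgroup ↥H) × Set (↥p.1 ⧸ p.2) |
      q.1.2.Normal ∧ q.2 = Set.univ}

/-! ### Coarse equivalence of metric families -/

/-- A coarse equivalence between two indexed metric families: a family of maps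
`f i : Z i → W (σ i)` which is uniformly expansive and effectively proper, admitting
a coarse embedding `g i : W (σ i) → Z i` in the opposite direction with
`d(x, g(f x)) ≤ C` and `d(y, f(g y)) ≤ C`. -/
def FamCoarseEquiv {ι κ : Type*} {Z : ι → Type*} {W : κ → Type*}
    (d : ∀ i, Z i → Z i → ℝ) (e : ∀ j, W j → W j → ℝ) : Prop :=
  ∃ (σ : ι → κ) (f : ∀ i, Z i → W (σ i)) (g : ∀ i, W (σ i) → Z i)
    (ρ₁ ρ₂ ρ₃ ρ₄ : ℝ → ℝ) (C : ℝ),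
    Monotone ρ₁ ∧ ProperFn ρ₁ ∧ Monotone ρ₂ ∧ ProperFn ρ₂ ∧
    Monotone ρ₃ ∧ ProperFn ρ₃ ∧ Monotone ρ₄ ∧ ProperFn ρ₄ ∧
    (∀ i x x', e (σ i) (f i x) (f i x') ≤ ρ₁ (d i x x')) ∧
    (∀ i x x', ρ₂ (d i x x') ≤ e (σ i) (f i x) (f i x')) ∧
    (∀ i y y', d i (g i y) (g i y') ≤ ρ₃ (e (σ i) y y')) ∧
    (∀ i y y', ρ₄ (e (σ i) y y') ≤ d i (g i y) (g i y')) ∧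
    (∀ i x, d i x (g i (f i x)) ≤ C) ∧ (∀ i y, e (σ i) y (f i (g i y)) ≤ C)

/-! ### Amenability (Følner) and elementary amenability -/

/-- Følner characterization of amenability for a countable discrete group. -/
def Amenable (G : Type*) [Group G] : Prop :=
  ∀ (F : Finset G) (ε : ℝ), 0 < ε →
    ∃ S : Finset G, S.Nonempty ∧ ∀ g ∈ F,
      letI := Classical.decEq G
      (((S.image (fun s => g * s)) ∆ S).card : ℝ) ≤ ε * (S.card : ℝ)

/-- The class of elementary amenable groups: the smallest class of groups containing
the finite groups and the abelian groups and closed under extensions and directed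
unions. -/
inductive IsElementaryAmenable : ∀ (G : Type u) [Group G], Prop where
  | of_finite (G : Type u) [Group G] (h : Finite G) : IsElementaryAmenable G
  | of_comm (G : Type u) [Group G] (h : ∀ a b : G, a * b = b * a) :
      IsElementaryAmenable G
  | of_extension (N G Q : Type u) [Group N] [Group G] [Group Q]
      (φ : N →* G) (ψ : G →* Q) (hφ : Function.Injective φ)
      (hψ : Function.Surjective ψ) (hex : φ.range = ψ.ker)
      (hN : IsElementaryAmenable N) (hQ : IsElementaryAmenable Q) :
      IsElementaryAmenable G
  | of_directedUnion (G : Type u) [Group G] (ι : Type u) (K : ι → Subgroup G)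
      (hdir : ∀ i j, ∃ k, K i ≤ K k ∧ K j ≤ K k)
      (hcover : ∀ g : G, ∃ i, g ∈ K i)
      (hK : ∀ i, IsElementaryAmenable ↥(K i)) : IsElementaryAmenable G


section DCollLemmas

variable {ι : Type*} {Z : ι → Type*} {κ : Type*} {W : κ → Type*}

lemma dcoll_def (d : ∀ i, Z i → Z i → ℝ) (α : Ordinal.{0}) (𝒳 : Fam Z) :
    𝒳 ∈ DColl d α ↔ (α = 0 ∧ Bdd d 𝒳) ∨
    (α ≠ 0 ∧ ∀ r : ℝ, 0 < r →
      ∃ β : Ordinal.{0}, ∃ _ : β < α, ∃ 𝒴 ∈ DColl d β, Decomp d r 𝒳 𝒴) := by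
  rw [DColl]; rfl

lemma pieceDecomp_self (d : ∀ i, Z i → Z i → ℝ) (r : ℝ) {𝒴 : Fam Z}
    {p : (i : ι) × Set (Z i)} (hp : p ∈ 𝒴) :
    PieceDecomp (d p.1) r p.2 {A : Set (Z p.1) | (⟨p.1, A⟩ : (i : ι) × Set (Z i)) ∈ 𝒴} := by
  refine ⟨{p.2}, ∅, by simp, ?_, ?_, ?_⟩
  · intro A hA B hB hAB
    simp only [Set.mem_singleton_iff] at hA hB
    exact absurd (hA.trans hB.symm) hAB
  · intro A hA; simp at hA
  · intro A hA
    simp only [Set.union_empty, Set.mem_singleton_iff] at hA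
    subst hA; exact hp

lemma decomp_self (d : ∀ i, Z i → Z i → ℝ) (r : ℝ) (𝒳 : Fam Z) : Decomp d r 𝒳 𝒳 :=
  fun _ hp => pieceDecomp_self d r hp

lemma dcoll_anti (d : ∀ i, Z i → Z i → ℝ) {α : Ordinal.{0}} {𝒳 𝒴 : Fam Z}
    (hsub : 𝒳 ⊆ 𝒴) (h : 𝒴 ∈ DColl d α) : 𝒳 ∈ DColl d α := by
  rw [dcoll_def] at h ⊢
  rcases h with ⟨h0, C, hC⟩ | ⟨hne, h⟩
  · exact Or.inl ⟨h0, C, fun p hp => hC p (hsub hp)⟩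
  · refine Or.inr ⟨hne, fun r hr => ?_⟩
    obtain ⟨β, hβ, 𝒴', h𝒴', hdec⟩ := h r hr
    exact ⟨β, hβ, 𝒴', h𝒴', fun p hp => hdec p (hsub hp)⟩

lemma dcoll_mono (d : ∀ i, Z i → Z i → ℝ) {α β : Ordinal.{0}} (hβα : β < α)
    {𝒳 : Fam Z} (h : 𝒳 ∈ DColl d β) : 𝒳 ∈ DColl d α := by
  rw [dcoll_def]
  refine Or.inr ⟨(pos_iff_ne_zero.mp (lt_of_le_of_lt (zero_le : (0 : Ordinal.{0}) ≤ β) hβα)), ?_⟩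
  intro r hr
  rw [dcoll_def] at h
  rcases h with ⟨h0, hB⟩ | ⟨hne, h⟩
  · subst h0
    exact ⟨0, hβα, 𝒳, by rw [dcoll_def]; exact Or.inl ⟨rfl, hB⟩, decomp_self d r 𝒳⟩
  · obtain ⟨β', hβ', 𝒴, h𝒴, hdec⟩ := h r hr
    exact ⟨β', lt_trans hβ' hβα, 𝒴, h𝒴, hdec⟩

lemma dcoll_union_bdd (d : ∀ i, Z i → Z i → ℝ) :
    ∀ α : Ordinal.{0}, α ≠ 0 → ∀ 𝒳 ℬ : Fam Z, 𝒳 ∈ DColl d α → Bdd d ℬ →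
      𝒳 ∪ ℬ ∈ DColl d α := by
  intro α
  induction α using Ordinal.induction with
  | h α IH =>
    intro hα 𝒳 ℬ hX hB
    rw [dcoll_def] at hX ⊢
    rcases hX with ⟨h0, _⟩ | ⟨_, hX⟩
    · exact absurd h0 hα
    refine Or.inr ⟨hα, fun r hr => ?_⟩
    obtain ⟨β, hβ, 𝒴, h𝒴, hdec⟩ := hX r hr
    refine ⟨β, hβ, 𝒴 ∪ ℬ, ?_, ?_⟩
    · by_cases hb : β = 0
      · subst hb
        rw [dcoll_def] at h𝒴 ⊢
        rcases h𝒴 with ⟨_, C, hC⟩ | ⟨hne, _⟩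
        · obtain ⟨C', hC'⟩ := hB
          refine Or.inl ⟨rfl, max C C', fun p hp x hx y hy => ?_⟩
          rcases hp with hp | hp
          · exact le_trans (hC p hp x hx y hy) (le_max_left _ _)
          · exact le_trans (hC' p hp x hx y hy) (le_max_right _ _)
        · exact absurd rfl hne
      · exact IH β hβ hb 𝒴 ℬ h𝒴 hB
    · intro p hp
      rcases hp with hp | hp
      · obtain ⟨P₀, P₁, hcov, hd0, hd1, hmem⟩ := hdec p hp
        exact ⟨P₀, P₁, hcov, hd0, hd1, fun A hA => Or.inl (hmem A hA)⟩
      · exact pieceDecomp_self d r (Or.inr hp)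

/-- The family of subsets of the `Z`-spaces admitting an isometric embedding into a member
of `𝒴`. -/
def PullFam (d : ∀ i, Z i → Z i → ℝ) (e : ∀ j, W j → W j → ℝ) (𝒴 : Fam W) : Fam Z :=
  {p | ∃ q ∈ 𝒴, ∃ f : Z p.1 → W q.1, (∀ x ∈ p.2, f x ∈ q.2) ∧
    ∀ x ∈ p.2, ∀ y ∈ p.2, e q.1 (f x) (f y) = d p.1 x y}

lemma dcoll_pull (d : ∀ i, Z i → Z i → ℝ) (e : ∀ j, W j → W j → ℝ) :
    ∀ α : Ordinal.{0}, ∀ 𝒴 : Fam W, 𝒴 ∈ DColl e α → PullFam d e 𝒴 ∈ DColl d α := by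
  intro α
  induction α using Ordinal.induction with
  | h α IH =>
    intro 𝒴 h𝒴
    rw [dcoll_def] at h𝒴 ⊢
    rcases h𝒴 with ⟨h0, C, hC⟩ | ⟨hne, h⟩
    · refine Or.inl ⟨h0, C, fun p hp x hx y hy => ?_⟩
      obtain ⟨q, hq, f, hmaps, hiso⟩ := hp
      rw [← hiso x hx y hy]
      exact hC q hq (f x) (hmaps x hx) (f y) (hmaps y hy)
    · refine Or.inr ⟨hne, fun r hr => ?_⟩
      obtain ⟨β, hβ, 𝒴', h𝒴', hdec⟩ := h r hr
      refine ⟨β, hβ, PullFam d e 𝒴', IH β hβ 𝒴' h𝒴', ?_⟩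
      intro p hp
      obtain ⟨q, hq, f, hmaps, hiso⟩ := hp
      obtain ⟨P₀, P₁, hcov, hd0, hd1, hmem⟩ := hdec q hq
      refine ⟨(fun A => p.2 ∩ f ⁻¹' A) '' P₀, (fun A => p.2 ∩ f ⁻¹' A) '' P₁, ?_, ?_, ?_, ?_⟩
      · ext x
        constructor
        · intro hx
          have : f x ∈ q.2 := hmaps x hx
          rw [hcov] at this
          rcases this with hfx | hfx
          · obtain ⟨A, hA, hfxA⟩ := hfx
            exact Or.inl ⟨p.2 ∩ f ⁻¹' A, ⟨A, hA, rfl⟩, hx, hfxA⟩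
          · obtain ⟨A, hA, hfxA⟩ := hfx
            exact Or.inr ⟨p.2 ∩ f ⁻¹' A, ⟨A, hA, rfl⟩, hx, hfxA⟩
        · intro hx
          rcases hx with ⟨_, ⟨A, _, rfl⟩, hx, _⟩ | ⟨_, ⟨A, _, rfl⟩, hx, _⟩ <;> exact hx
      · rintro A' ⟨A, hA, rfl⟩ B' ⟨B, hB, rfl⟩ hAB x hx y hy
        have hABne : A ≠ B := fun h => hAB (by rw [h])
        rw [← hiso x hx.1 y hy.1]
        exact hd0 A hA B hB hABne (f x) hx.2 (f y) hy.2
      · rintro A' ⟨A, hA, rfl⟩ B' ⟨B, hB, rfl⟩ hAB x hx y hy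
        have hABne : A ≠ B := fun h => hAB (by rw [h])
        rw [← hiso x hx.1 y hy.1]
        exact hd1 A hA B hB hABne (f x) hx.2 (f y) hy.2
      · rintro A' hA'
        have : ∃ A ∈ P₀ ∪ P₁, A' = p.2 ∩ f ⁻¹' A := by
          rcases hA' with ⟨A, hA, rfl⟩ | ⟨A, hA, rfl⟩
          exacts [⟨A, Or.inl hA, rfl⟩, ⟨A, Or.inr hA, rfl⟩]
        obtain ⟨A, hA, rfl⟩ := this
        refine ⟨⟨q.1, A⟩, hmem A hA, f, fun x hx => hx.2, ?_⟩
        intro x hx y hy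
        exact hiso x hx.1 y hy.1

end DCollLemmas
section QdistLemmas

variable {G : Type*} [Group G] {l : G → ℝ}

lemma qdist_set_nonempty (N : Subgroup G) (g h : G) :
    {r : ℝ | ∃ g' h' : G, (QuotientGroup.mk g' : G ⧸ N) = QuotientGroup.mk g ∧
      (QuotientGroup.mk h' : G ⧸ N) = QuotientGroup.mk h ∧ r = dl l g' h'}.Nonempty :=
  ⟨dl l g h, g, h, rfl, rfl, rfl⟩

lemma qdist_bddBelow (hl : IsLengthFunction l) (N : Subgroup G) (x y : G ⧸ N) :
    BddBelow {r : ℝ | ∃ g' h' : G, (QuotientGroup.mk g' : G ⧸ N) = x ∧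
      (QuotientGroup.mk h' : G ⧸ N) = y ∧ r = dl l g' h'} := by
  refine ⟨0, fun r hr => ?_⟩
  obtain ⟨g', h', _, _, rfl⟩ := hr
  exact hl.nonneg _

lemma qdist_mk_le (hl : IsLengthFunction l) (N : Subgroup G) (g h : G) :
    qdist l N (QuotientGroup.mk g) (QuotientGroup.mk h) ≤ dl l g h :=
  csInf_le (qdist_bddBelow hl N _ _) ⟨g, h, rfl, rfl, rfl⟩

lemma qdist_self (hl : IsLengthFunction l) (N : Subgroup G) (x : G ⧸ N) :
    qdist l N x x = 0 := by
  induction x using QuotientGroup.induction_on with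
  | H g =>
    refine le_antisymm ?_ ?_
    · have := qdist_mk_le hl N g g
      simpa [dl, hl.len_one] using this
    · exact le_csInf (qdist_set_nonempty N g g) (fun r hr => by
        obtain ⟨g', h', _, _, rfl⟩ := hr; exact hl.nonneg _)

/-- The key isometry lemma: if `N` has no nontrivial element of length `≤ 4c` and
`l g, l h < c`, then the quotient distance of `[g]`, `[h]` equals `d(g,h)`. -/
lemma qdist_eq_dl (hl : IsLengthFunction l) {N : Subgroup G} [hN : N.Normal] {c : ℝ}
    (hsafe : ∀ n ∈ N, l n ≤ 4 * c → n = 1) {g h : G} (hg : l g < c) (hh : l h < c) :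
    qdist l N (QuotientGroup.mk g) (QuotientGroup.mk h) = dl l g h := by
  have hgh : l (g⁻¹ * h) < 2 * c := by
    calc l (g⁻¹ * h) ≤ l g⁻¹ + l h := hl.subadd _ _
    _ = l g + l h := by rw [hl.len_inv]
    _ < 2 * c := by linarith
  refine le_antisymm (qdist_mk_le hl N g h) (le_csInf (qdist_set_nonempty N g h) ?_)
  rintro r ⟨g', h', hg', hh', rfl⟩
  rw [QuotientGroup.eq] at hg' hh'
  -- g'⁻¹ * h' = (g⁻¹ h) * n with n ∈ N
  set a : G := g'⁻¹ * g with ha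
  set b : G := h'⁻¹ * h with hb
  have hginv : g' = g * a⁻¹ := by rw [ha]; group
  have hhinv : h' = h * b⁻¹ := by rw [hb]; group
  have hmemb : b ∈ N := hh'
  have hmema : a ∈ N := hg'
  have key : g'⁻¹ * h' = (g⁻¹ * h) * ((g⁻¹ * h)⁻¹ * a * (g⁻¹ * h) * b⁻¹) := by
    rw [hginv, hhinv]; group
  set n : G := (g⁻¹ * h)⁻¹ * a * (g⁻¹ * h) * b⁻¹ with hn
  have hnN : n ∈ N := N.mul_mem (hN.conj_mem' a hmema (g⁻¹ * h)) (N.inv_mem hmemb)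
  show dl l g h ≤ dl l g' h'
  unfold dl
  rw [key]
  by_cases h1 : n = 1
  · rw [h1, mul_one]
  · have hln : 4 * c < l n := lt_of_not_ge (fun hle => h1 (hsafe n hnN hle))
    have : l n ≤ l (g⁻¹ * h) + l ((g⁻¹ * h) * n) := by
      have := hl.subadd (g⁻¹ * h)⁻¹ ((g⁻¹ * h) * n)
      rw [hl.len_inv] at this
      calc l n = l ((g⁻¹ * h)⁻¹ * ((g⁻¹ * h) * n)) := by group
      _ ≤ l (g⁻¹ * h)⁻¹ + l ((g⁻¹ * h) * n) := hl.subadd _ _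
      _ = l (g⁻¹ * h) + l ((g⁻¹ * h) * n) := by rw [hl.len_inv]
    linarith

/-- Minimal length representatives exist. -/
lemma exists_minRep (hl : IsLengthFunction l) (N : Subgroup G) (x : G ⧸ N) :
    ∃ u : G, (QuotientGroup.mk u : G ⧸ N) = x ∧ ∀ v : G, (QuotientGroup.mk v : G ⧸ N) = x → l u ≤ l v := by
  induction x using QuotientGroup.induction_on with
  | H g =>
    have hfin : {v : G | (QuotientGroup.mk v : G ⧸ N) = QuotientGroup.mk g ∧ l v ≤ l g}.Finite :=
      (hl.proper (l g)).subset (fun v hv => hv.2)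
    have hne : ((hfin.toFinset).Nonempty) := by
      rw [Set.Finite.toFinset_nonempty]
      exact ⟨g, rfl, le_refl _⟩
    obtain ⟨u, hu, hmin⟩ := hfin.toFinset.exists_min_image l hne
    rw [Set.Finite.mem_toFinset] at hu
    refine ⟨u, hu.1, fun v hv => ?_⟩
    by_cases hvg : l v ≤ l g
    · exact hmin v (by rw [Set.Finite.mem_toFinset]; exact ⟨hv, hvg⟩)
    · exact le_trans hu.2 (le_of_not_ge hvg)

/-- `qdist` from the identity coset is the length of a minimal representative. -/
lemma qdist_one_eq (hl : IsLengthFunction l) (N : Subgroup G) [hN : N.Normal] {x : G ⧸ N} {u : G}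
    (hu : (QuotientGroup.mk u : G ⧸ N) = x)
    (hmin : ∀ v : G, (QuotientGroup.mk v : G ⧸ N) = x → l u ≤ l v) :
    qdist l N (QuotientGroup.mk 1) x = l u := by
  subst hu
  refine le_antisymm ?_ (le_csInf (qdist_set_nonempty N 1 u) ?_)
  · have := qdist_mk_le hl N 1 u
    simpa [dl] using this
  · rintro r ⟨g', h', hg', hh', rfl⟩
    rw [QuotientGroup.eq] at hg' hh'
    have hg'N : g' ∈ N := N.inv_mem_iff.mp (by simpa using hg')
    have : (QuotientGroup.mk (g'⁻¹ * h') : G ⧸ N) = QuotientGroup.mk u := by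
      rw [QuotientGroup.eq]
      have heq : (g'⁻¹ * h')⁻¹ * u = (h'⁻¹ * g' * h'⁻¹⁻¹) * (h'⁻¹ * u) := by group
      rw [heq]
      exact N.mul_mem (hN.conj_mem g' hg'N h'⁻¹) hh'
    exact hmin _ this

end QdistLemmas
section Residual

variable {G : Type*} [Group G] {l : G → ℝ} {N : ℕ → Subgroup G}

lemma N_antitone (hmono : ∀ i, N (i + 1) ≤ N i) : ∀ i j : ℕ, i ≤ j → N j ≤ N i := by
  intro i j hij
  induction j with
  | zero => simp_all
  | succ j IH =>
    rcases Nat.lt_or_ge i (j+1) with h | h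
    · exact le_trans (hmono j) (IH (Nat.lt_succ_iff.mp h))
    · have : i = j + 1 := le_antisymm hij h
      subst this; exact le_rfl

lemma exists_safe_index (hl : IsLengthFunction l) (hmono : ∀ i, N (i + 1) ≤ N i)
    (htriv : ∀ g : G, (∀ i, g ∈ N i) → g = 1) (c : ℝ) :
    ∃ i₀ : ℕ, ∀ i ≥ i₀, ∀ n ∈ N i, l n ≤ c → n = 1 := by
  classical
  have hF : {g : G | l g ≤ c ∧ g ≠ 1}.Finite := (hl.proper c).subset (fun g hg => hg.1)
  have hex : ∀ g : G, g ≠ 1 → ∃ i, g ∉ N i := by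
    intro g hg
    by_contra hc
    push_neg at hc
    exact hg (htriv g hc)
  set ix : G → ℕ := fun g => if h : ∃ i, g ∉ N i then h.choose else 0 with hix
  refine ⟨hF.toFinset.sup ix, fun i hi n hnN hln => ?_⟩
  by_contra hn1
  have hnF : n ∈ hF.toFinset := by rw [Set.Finite.mem_toFinset]; exact ⟨hln, hn1⟩
  have hexn := hex n hn1
  have h1 : ix n = hexn.choose := by rw [hix]; simp only [dif_pos hexn]
  have h2 : n ∉ N (ix n) := by rw [h1]; exact hexn.choose_spec
  have h3 : ix n ≤ i := le_trans (Finset.le_sup hnF) hi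
  exact h2 (N_antitone hmono _ _ h3 hnN)

lemma exists_eps (hl : IsLengthFunction l) :
    ∃ ε : ℝ, 0 < ε ∧ ε ≤ 1 ∧ ∀ g : G, g ≠ 1 → ε < l g := by
  classical
  have hF : ({g : G | l g ≤ 1} \ {1}).Finite := ((hl.proper 1).diff)
  rcases hF.toFinset.eq_empty_or_nonempty with he | hne
  · refine ⟨1/2, by norm_num, by norm_num, fun g hg => ?_⟩
    have : g ∉ ({g : G | l g ≤ 1} \ {1}) := by
      rw [← Set.Finite.mem_toFinset hF, he]; simp
    have : ¬ (l g ≤ 1) := by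
      intro hle
      exact this ⟨hle, by simpa using hg⟩
    linarith [lt_of_not_ge this]
  · obtain ⟨g₀, hg₀, hmin⟩ := hF.toFinset.exists_min_image l hne
    rw [Set.Finite.mem_toFinset] at hg₀
    have hg₀pos : 0 < l g₀ := by
      rcases lt_or_eq_of_le (hl.nonneg g₀) with h | h
      · exact h
      · exact absurd (hl.eq_one g₀ h.symm) (by simpa using hg₀.2)
    refine ⟨min (l g₀ / 2) (1/2), by positivity, by
      calc min (l g₀ / 2) (1/2) ≤ 1/2 := min_le_right _ _
      _ ≤ 1 := by norm_num, fun g hg => ?_⟩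
    by_cases hle : l g ≤ 1
    · have hgS : g ∈ hF.toFinset := by
        rw [Set.Finite.mem_toFinset]; exact ⟨hle, by simpa using hg⟩
      calc min (l g₀ / 2) (1/2) ≤ l g₀ / 2 := min_le_left _ _
      _ < l g₀ := by linarith
      _ ≤ l g := hmin g hgS
    · calc min (l g₀ / 2) (1/2) ≤ 1/2 := min_le_right _ _
      _ < 1 := by norm_num
      _ < l g := lt_of_not_ge hle

/-- The radius sequence for the forward direction: positive, monotone, tending to
infinity, and such that `N i` contains no nontrivial element of length `≤ 4 * r i`. -/
lemma exists_good_radii (hl : IsLengthFunction l) (hmono : ∀ i, N (i + 1) ≤ N i)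
    (htriv : ∀ g : G, (∀ i, g ∈ N i) → g = 1) :
    ∃ r : ℕ → ℝ, (∀ i, 0 < r i) ∧ Monotone r ∧ Tendsto r atTop atTop ∧
      ∀ i, ∀ n ∈ N i, l n ≤ 4 * r i → n = 1 := by
  classical
  obtain ⟨ε, hε0, hε1, hεlt⟩ := exists_eps hl
  set φ : ℕ → ℕ := fun k =>
    (exists_safe_index hl hmono htriv (4 * k + 4)).choose with hφ
  have hφspec : ∀ k : ℕ, ∀ i ≥ φ k, ∀ n ∈ N i, l n ≤ 4 * k + 4 → n = 1 := fun k =>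
    (exists_safe_index hl hmono htriv (4 * k + 4)).choose_spec
  set cnt : ℕ → ℕ := fun i => ((Finset.range (i+1)).filter (fun k => φ k ≤ i)).card with hcnt
  set r : ℕ → ℝ := fun i => (ε/8) * (1 + cnt i) with hr
  have hcntmono : Monotone cnt := by
    intro i j hij
    apply Finset.card_le_card
    intro k hk
    rw [Finset.mem_filter, Finset.mem_range] at hk ⊢
    exact ⟨lt_of_lt_of_le hk.1 (by omega), le_trans hk.2 hij⟩
  have hrmono : Monotone r := by
    intro i j hij
    have : (cnt i : ℝ) ≤ cnt j := Nat.cast_le.mpr (hcntmono hij)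
    rw [hr]
    dsimp only
    nlinarith
  have hcnt_unbdd : ∀ K : ℕ, ∃ i, K ≤ cnt i := by
    intro K
    refine ⟨max K ((Finset.range K).sup φ), ?_⟩
    set i := max K ((Finset.range K).sup φ)
    have : Finset.range K ⊆ (Finset.range (i+1)).filter (fun k => φ k ≤ i) := by
      intro k hk
      rw [Finset.mem_filter, Finset.mem_range]
      rw [Finset.mem_range] at hk
      constructor
      · have : K ≤ i := le_max_left _ _
        omega
      · exact le_trans (Finset.le_sup (by simpa using hk)) (le_max_right _ _)
    calc K = (Finset.range K).card := (Finset.card_range K).symm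
    _ ≤ _ := Finset.card_le_card this
  refine ⟨r, fun i => by rw [hr]; dsimp only; positivity, hrmono, ?_, ?_⟩
  · apply tendsto_atTop_atTop_of_monotone hrmono
    intro b
    obtain ⟨i, hi⟩ := hcnt_unbdd (Nat.ceil (8 * |b| / ε))
    refine ⟨i, ?_⟩
    have h1 : (8 * |b| / ε : ℝ) ≤ Nat.ceil (8 * |b| / ε) := Nat.le_ceil _
    have h2 : (Nat.ceil (8 * |b| / ε) : ℝ) ≤ cnt i := Nat.cast_le.mpr hi
    have h3 : 8 * |b| / ε ≤ cnt i := le_trans h1 h2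
    have h4 : 8 * |b| ≤ ε * cnt i := by
      rw [div_le_iff₀ hε0] at h3
      linarith [mul_comm ε (cnt i : ℝ)]
    have h5 : b ≤ |b| := le_abs_self b
    rw [hr]; dsimp only
    nlinarith [hl.nonneg 1]
  · intro i n hnN hln
    by_contra hn1
    have hεn : ε < l n := hεlt n hn1
    rcases Nat.eq_zero_or_pos (cnt i) with h0 | hpos
    · rw [hr] at hln; dsimp only at hln
      rw [h0] at hln
      norm_num at hln
      linarith
    · -- there is k in the filter with cnt i ≤ k + 1
      have hexk : ∃ k ∈ (Finset.range (i+1)).filter (fun k => φ k ≤ i), cnt i ≤ k + 1 := by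
        by_contra hc
        push_neg at hc
        have hsub : (Finset.range (i+1)).filter (fun k => φ k ≤ i) ⊆
            Finset.range (cnt i - 1) := by
          intro k hk
          rw [Finset.mem_range]
          have := hc k hk
          omega
        have h6 := Finset.card_le_card hsub
        rw [Finset.card_range] at h6
        have h7 : cnt i ≤ cnt i - 1 := h6
        omega
      obtain ⟨k, hk, hkge⟩ := hexk
      rw [Finset.mem_filter] at hk
      refine hn1 (hφspec k i hk.2 n hnN ?_)
      have hc1 : (1 : ℝ) + cnt i ≤ 4 * k + 4 := by
        have : (cnt i : ℝ) ≤ k + 1 := by exact_mod_cast hkge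
        have hk0 : (0:ℝ) ≤ k := Nat.cast_nonneg k
        linarith
      have h8 : (0:ℝ) ≤ (cnt i : ℝ) := Nat.cast_nonneg _
      have h9 : ε * (1 + cnt i) ≤ 1 * (1 + cnt i) :=
        mul_le_mul_of_nonneg_right hε1 (by linarith)
      have hri : r i = ε/8 * (1 + cnt i) := rfl
      have h10 : 4 * r i ≤ 1 + cnt i := by rw [hri]; nlinarith
      linarith

end Residual
section Diam

lemma diamD_set_finite {X : Type*} [Finite X] (d : X → X → ℝ) :
    {r : ℝ | ∃ x y : X, r = d x y}.Finite := by
  have h : {r : ℝ | ∃ x y : X, r = d x y} = Set.range (fun p : X × X => d p.1 p.2) := by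
    ext r
    simp only [Set.mem_setOf_eq, Set.mem_range, Prod.exists]
    constructor
    · rintro ⟨x, y, rfl⟩; exact ⟨x, y, rfl⟩
    · rintro ⟨x, y, rfl⟩; exact ⟨x, y, rfl⟩
  rw [h]; exact Set.finite_range _

lemma le_diamD {X : Type*} [Finite X] (d : X → X → ℝ) (x y : X) : d x y ≤ diamD d :=
  le_csSup (diamD_set_finite d).bddAbove ⟨x, y, rfl⟩

lemma cuDist_same {X : ℕ → Type*} (d : ∀ i, X i → X i → ℝ) (i : ℕ) (a b : X i) :
    cuDist d ⟨i, a⟩ ⟨i, b⟩ = d i a b := by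
  simp only [cuDist]
  simp

lemma cuDist_ne {X : ℕ → Type*} (d : ∀ i, X i → X i → ℝ) {x y : Σ i, X i} (h : x.1 ≠ y.1) :
    cuDist d x y = diamD (d x.1) + diamD (d y.1) + (x.1 : ℝ) + (y.1 : ℝ) := by
  simp only [cuDist]
  rw [dif_neg h]

end Diam
section Forward

lemma forward_direction {G : Type*} [Group G]
    (l : G → ℝ) (hl : IsLengthFunction l) (N : ℕ → Subgroup G)
    (hnorm : ∀ i, (N i).Normal) (hmono : ∀ i, N (i + 1) ≤ N i)
    (hfin : ∀ i, (N i).FiniteIndex) (htriv : ∀ g : G, (∀ i, g ∈ N i) → g = 1)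
    (h : SpaceFDC (dl l)) :
    ∃ r : ℕ → ℝ, (∀ i, 0 < r i) ∧ Monotone r ∧ Tendsto r atTop atTop ∧
      SpaceFDC (cuDist
        (X := fun i => {x : G ⧸ N i // qdist l (N i) (QuotientGroup.mk 1) x < r i})
        (fun i x y => qdist l (N i) x.1 y.1)) := by
  classical
  obtain ⟨r, hrpos, hrmono, hrtend, hsafe⟩ := exists_good_radii hl hmono htriv
  obtain ⟨α, hα⟩ := h
  have hlt : ∀ γ : Ordinal.{0}, γ < γ + 1 := fun γ => by
    rw [Ordinal.add_one_eq_succ]; exact Order.lt_succ γ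
  have hne1 : (α + 1 : Ordinal.{0}) ≠ 0 :=
    pos_iff_ne_zero.mp (lt_of_le_of_lt zero_le (hlt α))
  have hα' : {p : (_ : Unit) × Set G | p.2 = Set.univ} ∈ DColl (fun _ => dl l) (α + 1) :=
    dcoll_mono _ (hlt α) hα
  refine ⟨r, hrpos, hrmono, hrtend, ?_⟩
  set Ball : ℕ → Type _ :=
    fun i => {x : G ⧸ N i // qdist l (N i) (QuotientGroup.mk 1) x < r i} with hBall
  set dP : ∀ i, Ball i → Ball i → ℝ := fun i x y => qdist l (N i) x.1 y.1 with hdP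
  haveI : ∀ i, Finite (G ⧸ N i) := fun i =>
    haveI := hfin i; Subgroup.finite_quotient_of_finiteIndex (H := N i)
  haveI hBfin : ∀ i, Finite (Ball i) := fun i => Subtype.finite
  -- basic facts about the pieces
  have hb0 : ∀ i, (⟨QuotientGroup.mk 1, by
      rw [qdist_self hl]; exact hrpos i⟩ : Ball i) = (⟨QuotientGroup.mk 1, by
      rw [qdist_self hl]; exact hrpos i⟩ : Ball i) := fun i => rfl
  have hD0 : ∀ i, 0 ≤ diamD (dP i) := by
    intro i
    have b : Ball i := ⟨QuotientGroup.mk 1, by rw [qdist_self hl]; exact hrpos i⟩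
    have h1 : dP i b b ≤ diamD (dP i) := le_diamD (dP i) b b
    have h2 : dP i b b = 0 := qdist_self hl (N i) _
    linarith
  have hDle : ∀ i (x y : Ball i), dP i x y ≤ diamD (dP i) := fun i => le_diamD (dP i)
  -- the isometric embedding of a piece into G
  set f : (Σ i, Ball i) → G := fun x => (exists_minRep hl (N x.1) x.2.1).choose with hf
  have hfspec : ∀ x : Σ i, Ball i,
      (QuotientGroup.mk (f x) : G ⧸ N x.1) = x.2.1 ∧
        ∀ v : G, (QuotientGroup.mk v : G ⧸ N x.1) = x.2.1 → l (f x) ≤ l v :=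
    fun x => (exists_minRep hl (N x.1) x.2.1).choose_spec
  have hflen : ∀ x : Σ i, Ball i, l (f x) < r x.1 := by
    intro x
    have h1 := qdist_one_eq (hl := hl) (N := N x.1) (hN := hnorm x.1)
      (hfspec x).1 (hfspec x).2
    have h2 := x.2.2
    rw [h1] at h2
    exact h2
  have hiso : ∀ (x y : Σ j, Ball j), x.1 = y.1 →
      dl l (f x) (f y) = cuDist dP x y := by
    rintro ⟨jx, bx⟩ ⟨jy, bb⟩ h
    dsimp only at h
    obtain rfl := h
    rw [cuDist_same]
    haveI := hnorm jx
    have hux := (hfspec ⟨jx, bx⟩).1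
    have huy := (hfspec ⟨jx, bb⟩).1
    have hlx := hflen ⟨jx, bx⟩
    have hly := hflen ⟨jx, bb⟩
    have hsafe' : ∀ n ∈ N jx, l n ≤ 4 * r jx → n = 1 := hsafe jx
    have key := qdist_eq_dl (hl := hl) (N := N jx) hsafe' hlx hly
    rw [show ((⟨jx, bx⟩ : Σ j, Ball j).2.1 : G ⧸ N jx) = bx.1 from rfl] at hux
    rw [show ((⟨jx, bb⟩ : Σ j, Ball j).2.1 : G ⧸ N jx) = bb.1 from rfl] at huy
    rw [hux, huy] at key
    exact key.symm
  refine ⟨α + 1 + 1, ?_⟩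
  rw [dcoll_def]
  refine Or.inr ⟨pos_iff_ne_zero.mp
    (lt_of_le_of_lt zero_le (hlt (α + 1))), fun ρ hρ => ?_⟩
  set k : ℕ := Nat.ceil ρ with hk
  have hρk : ρ ≤ (k : ℝ) := Nat.le_ceil ρ
  set chunk : Set (Σ i, Ball i) := {x | x.1 ≤ k} with hchunk
  set tail : ℕ → Set (Σ i, Ball i) := fun i => {x | x.1 = i} with htail
  set 𝒴 : Fam (fun _ : Unit => Σ i, Ball i) :=
    PullFam (fun _ => cuDist dP) (fun _ => dl l) {p : (_ : Unit) × Set G | p.2 = Set.univ}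
      ∪ {(⟨(), chunk⟩ : (_ : Unit) × Set (Σ i, Ball i))} with h𝒴
  have h𝒴mem : 𝒴 ∈ DColl (fun _ => cuDist dP) (α + 1) := by
    apply dcoll_union_bdd _ _ hne1
    · exact dcoll_pull _ _ _ _ hα'
    · -- the chunk is bounded
      set S : ℝ := ∑ i ∈ Finset.range (k+1), diamD (dP i) with hS
      have hS0 : 0 ≤ S := Finset.sum_nonneg (fun i _ => hD0 i)
      have hDS : ∀ i, i ≤ k → diamD (dP i) ≤ S := fun i hi =>
        Finset.single_le_sum (fun j _ => hD0 j) (Finset.mem_range.mpr (by omega))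
      refine ⟨2 * S + 2 * k, ?_⟩
      rintro p hp x hx y hy
      rw [Set.mem_singleton_iff] at hp
      subst hp
      simp only at hx hy
      show cuDist dP x y ≤ 2 * S + 2 * (k:ℝ)
      have hxk : x.1 ≤ k := hx
      have hyk : y.1 ≤ k := hy
      have hxkR : (x.1 : ℝ) ≤ k := Nat.cast_le.mpr hxk
      have hykR : (y.1 : ℝ) ≤ k := Nat.cast_le.mpr hyk
      by_cases hxy : x.1 = y.1
      · obtain ⟨jx, bx⟩ := x
        obtain ⟨jy, bb⟩ := y
        dsimp only at hxy
        subst hxy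
        rw [cuDist_same]
        have := hDle jx bx bb
        have := hDS jx hxk
        have : (0:ℝ) ≤ k := Nat.cast_nonneg k
        linarith [hDle jx bx bb, hDS jx hxk]
      · rw [cuDist_ne dP hxy]
        have h1 := hDS x.1 hxk
        have h2 := hDS y.1 hyk
        linarith
  refine ⟨α + 1, hlt (α + 1), 𝒴, h𝒴mem, ?_⟩
  rintro p hp
  have hp2 : p.2 = Set.univ := hp
  refine ⟨{chunk} ∪ {A | ∃ i, k < i ∧ A = tail i}, ∅, ?_, ?_, ?_, ?_⟩
  · rw [hp2]
    ext x
    simp only [Set.sUnion_empty, Set.union_empty, Set.mem_univ, true_iff, Set.mem_sUnion]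
    by_cases hx : x.1 ≤ k
    · exact ⟨chunk, Or.inl rfl, hx⟩
    · exact ⟨tail x.1, Or.inr ⟨x.1, by omega, rfl⟩, rfl⟩
  · -- ρ-disjointness
    have hcross : ∀ x y : Σ i, Ball i, x.1 ≠ y.1 → (k < x.1 ∨ k < y.1) →
        ρ ≤ cuDist dP x y := by
      intro x y hxy hor
      rw [cuDist_ne dP hxy]
      have h1 := hD0 x.1
      have h2 := hD0 y.1
      have h3 : (0:ℝ) ≤ (x.1 : ℝ) := Nat.cast_nonneg _
      have h4 : (0:ℝ) ≤ (y.1 : ℝ) := Nat.cast_nonneg _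
      rcases hor with hor | hor
      · have : (k:ℝ) + 1 ≤ (x.1 : ℝ) := by exact_mod_cast hor
        linarith
      · have : (k:ℝ) + 1 ≤ (y.1 : ℝ) := by exact_mod_cast hor
        linarith
    rintro A hA B hB hAB x hx y hy
    rcases hA with hA | ⟨i, hik, rfl⟩ <;> rcases hB with hB | ⟨j, hjk, rfl⟩
    · rw [Set.mem_singleton_iff] at hA hB
      exact absurd (hA.trans hB.symm) hAB
    · rw [Set.mem_singleton_iff] at hA
      subst hA
      have hxk : x.1 ≤ k := hx
      have hyj : y.1 = j := hy
      exact hcross x y (by omega) (by omega)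
    · rw [Set.mem_singleton_iff] at hB
      subst hB
      have hxi : x.1 = i := hx
      have hyk : y.1 ≤ k := hy
      exact hcross x y (by omega) (by omega)
    · have hij : i ≠ j := by
        intro hij
        exact hAB (by rw [hij])
      have hxi : x.1 = i := hx
      have hyj : y.1 = j := hy
      exact hcross x y (by omega) (by omega)
  · intro A hA; simp at hA
  · rintro A hA
    rw [Set.union_empty] at hA
    rcases hA with hA | ⟨i, hik, rfl⟩
    · rw [Set.mem_singleton_iff] at hA
      subst hA
      exact Or.inr rfl
    · -- tails embed in G
      refine Or.inl ⟨⟨(), Set.univ⟩, rfl, f, fun x _ => Set.mem_univ _, ?_⟩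
      intro x hx y hy
      have hxi : x.1 = i := hx
      have hyi : y.1 = i := hy
      exact hiso x y (hxi.trans hyi.symm)

end Forward
section Reverse

lemma reverse_direction {G : Type*} [Group G]
    (l : G → ℝ) (hl : IsLengthFunction l) (N : ℕ → Subgroup G)
    (hnorm : ∀ i, (N i).Normal) (hmono : ∀ i, N (i + 1) ≤ N i)
    (htriv : ∀ g : G, (∀ i, g ∈ N i) → g = 1) (r : ℕ → ℝ)
    (hrtend : Tendsto r atTop atTop)
    (h : SpaceFDC (cuDist
      (X := fun i => {x : G ⧸ N i // qdist l (N i) (QuotientGroup.mk 1) x < r i})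
      (fun i x y => qdist l (N i) x.1 y.1))) :
    SpaceFDC (dl l) := by
  classical
  obtain ⟨α, hα⟩ := h
  have hlt : ∀ γ : Ordinal.{0}, γ < γ + 1 := fun γ => by
    rw [Ordinal.add_one_eq_succ]; exact Order.lt_succ γ
  set Ball : ℕ → Type _ :=
    fun i => {x : G ⧸ N i // qdist l (N i) (QuotientGroup.mk 1) x < r i} with hBall
  set dP : ∀ i, Ball i → Ball i → ℝ := fun i x y => qdist l (N i) x.1 y.1 with hdP
  set 𝒴 : Fam (fun _ : Unit => G) :=
    PullFam (fun _ => dl l) (fun _ => cuDist dP)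
      {p : (_ : Unit) × Set (Σ i, Ball i) | p.2 = Set.univ} with h𝒴
  have h𝒴mem : 𝒴 ∈ DColl (fun _ => dl l) α := dcoll_pull _ _ _ _ hα
  have hqle : ∀ (i : ℕ) (g : G), qdist l (N i) (QuotientGroup.mk 1) (QuotientGroup.mk g) ≤ l g := by
    intro i g
    have := qdist_mk_le (hl := hl) (N := N i) 1 g
    simpa [dl] using this
  -- every bounded subset of G belongs to the pulled-back family
  have hbdd : ∀ (A : Set G) (c : ℝ), 0 < c → (∀ g ∈ A, l g < c) →
      (⟨(), A⟩ : (_ : Unit) × Set G) ∈ 𝒴 := by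
    intro A c hc hA
    obtain ⟨i₂, hi₂⟩ := exists_safe_index hl hmono htriv (4 * c)
    obtain ⟨i, hri, hii₂⟩ :=
      ((hrtend.eventually_ge_atTop (c + 1)).and (eventually_ge_atTop i₂)).exists
    haveI := hnorm i
    have hone : qdist l (N i) (QuotientGroup.mk 1) (QuotientGroup.mk (1 : G)) < r i := by
      rw [qdist_self hl]; linarith
    set f : G → Σ j, Ball j := fun g =>
      if hg : qdist l (N i) (QuotientGroup.mk 1) (QuotientGroup.mk g) < r i then
        ⟨i, ⟨QuotientGroup.mk g, hg⟩⟩ else ⟨i, ⟨QuotientGroup.mk 1, hone⟩⟩ with hf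
    have hqA : ∀ g, g ∈ A → qdist l (N i) (QuotientGroup.mk 1) (QuotientGroup.mk g) < r i := by
      intro g hg
      have := hqle i g
      have := hA g hg
      linarith
    have hfval : ∀ g (hg : g ∈ A), f g = ⟨i, ⟨QuotientGroup.mk g, hqA g hg⟩⟩ := by
      intro g hg
      rw [hf]
      exact dif_pos (hqA g hg)
    refine ⟨⟨(), Set.univ⟩, rfl, f, fun x _ => Set.mem_univ _, ?_⟩
    intro x hx y hy
    show cuDist dP (f x) (f y) = dl l x y
    rw [hfval x hx, hfval y hy, cuDist_same]
    have hsafe' : ∀ n ∈ N i, l n ≤ 4 * c → n = 1 := hi₂ i hii₂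
    exact qdist_eq_dl (hl := hl) (N := N i) hsafe' (hA x hx) (hA y hy)
  refine ⟨α + 1, ?_⟩
  rw [dcoll_def]
  refine Or.inr ⟨pos_iff_ne_zero.mp
    (lt_of_le_of_lt zero_le (hlt α)), fun ρ hρ => ?_⟩
  refine ⟨α, hlt α, 𝒴, h𝒴mem, ?_⟩
  rintro p hp
  have hp2 : p.2 = Set.univ := hp
  set Ann : ℕ → Set G := fun k => {g : G | (k : ℝ) * ρ ≤ l g ∧ l g < ((k : ℝ) + 1) * ρ}
    with hAnn
  have hmemAnn : ∀ k : ℕ, Ann k ∈ {A : Set G | (⟨p.1, A⟩ : (_ : Unit) × Set G) ∈ 𝒴} := by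
    intro k
    have : (⟨(), Ann k⟩ : (_ : Unit) × Set G) ∈ 𝒴 :=
      hbdd (Ann k) (((k : ℝ) + 1) * ρ) (by positivity) (fun g hg => hg.2)
    exact this
  have hdl_symm : ∀ x y : G, dl l x y = dl l y x := by
    intro x y
    rw [dl, dl, ← hl.len_inv]
    congr 1
    group
  have hdisj2 : ∀ (a b : ℕ), a + 2 ≤ b → ∀ x ∈ Ann a, ∀ y ∈ Ann b, ρ ≤ dl l x y := by
    intro a b hab x hx y hy
    have h1 : l y ≤ l x + l (x⁻¹ * y) := by
      calc l y = l (x * (x⁻¹ * y)) := by group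
      _ ≤ l x + l (x⁻¹ * y) := hl.subadd _ _
    have h2 : ((a : ℝ) + 2) * ρ ≤ (b : ℝ) * ρ := by
      have : (a : ℝ) + 2 ≤ (b : ℝ) := by exact_mod_cast hab
      nlinarith
    have h3 := hx.2
    have h4 := hy.1
    show ρ ≤ l (x⁻¹ * y)
    nlinarith
  have hdisj : ∀ (a b : ℕ), a % 2 = b % 2 → a ≠ b →
      ∀ x ∈ Ann a, ∀ y ∈ Ann b, ρ ≤ dl l x y := by
    intro a b hpar hab x hx y hy
    rcases Nat.lt_or_ge a b with h | h
    · exact hdisj2 a b (by omega) x hx y hy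
    · rw [hdl_symm]
      exact hdisj2 b a (by omega) y hy x hx
  refine ⟨{A | ∃ k, k % 2 = 0 ∧ A = Ann k}, {A | ∃ k, k % 2 = 1 ∧ A = Ann k}, ?_, ?_, ?_, ?_⟩
  · rw [hp2]
    ext g
    simp only [Set.mem_univ, true_iff, Set.mem_union, Set.mem_sUnion, Set.mem_setOf_eq]
    have hk0 : 0 ≤ l g / ρ := div_nonneg (hl.nonneg g) (le_of_lt hρ)
    set k : ℕ := Nat.floor (l g / ρ) with hkdef
    have hgk : g ∈ Ann k := by
      constructor
      · have := Nat.floor_le hk0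
        rw [← hkdef] at this
        calc (k : ℝ) * ρ ≤ (l g / ρ) * ρ := by nlinarith
        _ = l g := by field_simp
      · have := Nat.lt_floor_add_one (l g / ρ)
        rw [← hkdef] at this
        have h2 : l g / ρ * ρ < ((k:ℝ) + 1) * ρ := by nlinarith
        calc l g = l g / ρ * ρ := by field_simp
        _ < ((k:ℝ) + 1) * ρ := h2
    rcases Nat.even_or_odd k with he | ho
    · exact Or.inl ⟨Ann k, ⟨k, Nat.even_iff.mp he, rfl⟩, hgk⟩
    · exact Or.inr ⟨Ann k, ⟨k, Nat.odd_iff.mp ho, rfl⟩, hgk⟩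
  · rintro A ⟨a, ha, rfl⟩ B ⟨b, hb, rfl⟩ hAB x hx y hy
    exact hdisj a b (ha.trans hb.symm) (fun hab => hAB (by rw [hab])) x hx y hy
  · rintro A ⟨a, ha, rfl⟩ B ⟨b, hb, rfl⟩ hAB x hx y hy
    exact hdisj a b (ha.trans hb.symm) (fun hab => hAB (by rw [hab])) x hx y hy
  · rintro A (⟨a, _, rfl⟩ | ⟨a, _, rfl⟩) <;> exact hmemAnn a

end Reverse

/-- Theorem 1: `G` has FDC iff there is an increasing sequence
`rᵢ → ∞` of positive reals such that the coarse disjoint union of the balls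
`B_{G/Nᵢ}(1, rᵢ)` has FDC. -/
theorem fdc_iff_coarseUnion_of_balls_fdc {G : Type*} [Group G] [Countable G]
    (l : G → ℝ) (hl : IsLengthFunction l) (N : ℕ → Subgroup G)
    (hnorm : ∀ i, (N i).Normal) (hmono : ∀ i, N (i + 1) ≤ N i) (h0 : N 0 = ⊤)
    (hfin : ∀ i, (N i).FiniteIndex) (htriv : ∀ g : G, (∀ i, g ∈ N i) → g = 1) :
    SpaceFDC (dl l) ↔
      ∃ r : ℕ → ℝ, (∀ i, 0 < r i) ∧ Monotone r ∧ Tendsto r atTop atTop ∧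
        SpaceFDC (cuDist
          (X := fun i => {x : G ⧸ N i // qdist l (N i) (QuotientGroup.mk 1) x < r i})
          (fun i x y => qdist l (N i) x.1 y.1)) := by
  constructor
  · intro h
    exact forward_direction l hl N hnorm hmono hfin htriv h
  · rintro ⟨r, hrpos, hrmono, hrtend, h⟩
    exact reverse_direction l hl N hnorm hmono htriv r hrtend h

end FDCPaper
end

section
/- Let G be a countable discrete group and N₀ a normal subgroup of G. If G has stable FDC, then the quotient group G/N₀ also has stable FDC. -/
open Set Filter
open scoped symmDiff

namespace FDCPaper

/-! ### Auxiliary: transfer of FDC along families of bijective isometries -/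

theorem DColl_transfer {ι κ : Type*} {Z : ι → Type*} {W : κ → Type*}
    (d : ∀ i, Z i → Z i → ℝ) (e : ∀ j, W j → W j → ℝ)
    (τ : κ → ι) (F : ∀ j, Z (τ j) → W j)
    (hbij : ∀ j, Function.Bijective (F j))
    (hiso : ∀ j x x', e j (F j x) (F j x') = d (τ j) x x')
    (α : Ordinal.{0}) :
    ∀ 𝒳 ∈ DColl d α, ∀ 𝒳' : Fam W,
      (∀ p ∈ 𝒳', (⟨τ p.1, F p.1 ⁻¹' p.2⟩ : (i : ι) × Set (Z i)) ∈ 𝒳) →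
      𝒳' ∈ DColl e α := by
  induction α using Ordinal.induction with
  | _ α IH =>
    intro 𝒳 h𝒳 𝒳' hsub
    rw [DColl] at h𝒳 ⊢
    rcases h𝒳 with ⟨hα, C, hC⟩ | ⟨hα, hdec⟩
    · left
      refine ⟨hα, C, ?_⟩
      rintro ⟨j, Y⟩ hp x hx y hy
      obtain ⟨a, rfl⟩ := (hbij j).2 x
      obtain ⟨b, rfl⟩ := (hbij j).2 y
      rw [hiso]
      exact hC _ (hsub _ hp) a hx b hy
    · right
      refine ⟨hα, fun r hr => ?_⟩
      obtain ⟨β, hβ, 𝒴, h𝒴, hD⟩ := hdec r hr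
      refine ⟨β, hβ, {q | (⟨τ q.1, F q.1 ⁻¹' q.2⟩ : (i : ι) × Set (Z i)) ∈ 𝒴},
        IH β hβ 𝒴 h𝒴 _ (fun q hq => hq), ?_⟩
      rintro ⟨j, Y⟩ hp
      obtain ⟨P₀, P₁, hXeq, hd0, hd1, hmem⟩ := hD _ (hsub _ hp)
      refine ⟨(Set.image (F j)) '' P₀, (Set.image (F j)) '' P₁, ?_, ?_, ?_, ?_⟩
      · have hY : Y = F j '' (F j ⁻¹' Y) := (Set.image_preimage_eq _ (hbij j).2).symm
        rw [hY]
        rw [show F j ⁻¹' Y = ⋃₀ P₀ ∪ ⋃₀ P₁ from hXeq, Set.image_union,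
          Set.image_sUnion, Set.image_sUnion, Set.sUnion_image, Set.sUnion_image]
      · rintro _ ⟨A, hA, rfl⟩ _ ⟨B, hB, rfl⟩ hne _ ⟨a, ha, rfl⟩ _ ⟨b, hb, rfl⟩
        rw [hiso]
        exact hd0 A hA B hB (fun h => hne (by rw [h])) a ha b hb
      · rintro _ ⟨A, hA, rfl⟩ _ ⟨B, hB, rfl⟩ hne _ ⟨a, ha, rfl⟩ _ ⟨b, hb, rfl⟩
        rw [hiso]
        exact hd1 A hA B hB (fun h => hne (by rw [h])) a ha b hb
      · rintro A' hA'
        have : ∃ A ∈ P₀ ∪ P₁, A' = F j '' A := by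
          rcases hA' with ⟨A, hA, rfl⟩ | ⟨A, hA, rfl⟩
          · exact ⟨A, Or.inl hA, rfl⟩
          · exact ⟨A, Or.inr hA, rfl⟩
        obtain ⟨A, hA, rfl⟩ := this
        show (⟨τ j, F j ⁻¹' (F j '' A)⟩ : (i : ι) × Set (Z i)) ∈ 𝒴
        rw [Set.preimage_image_eq _ (hbij j).1]
        exact hmem A hA

/-! ### Auxiliary: the correspondence between subquotients of `G ⧸ N₀` and of `G` -/

section QuotTransfer

variable {G : Type*} [Group G] (N₀ : Subgroup G) [N₀.Normal]

/-- The preimage in `G` of a subgroup of `G ⧸ N₀`. -/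
abbrev qH (H' : Subgroup (G ⧸ N₀)) : Subgroup G := H'.comap (QuotientGroup.mk' N₀)

/-- The projection `qH H' → H'`. -/
def qρ (H' : Subgroup (G ⧸ N₀)) : ↥(qH N₀ H') →* ↥H' :=
  MonoidHom.codRestrict ((QuotientGroup.mk' N₀).domRestrict (qH N₀ H')) H' fun g => g.2

lemma qρ_coe (H' : Subgroup (G ⧸ N₀)) (g : ↥(qH N₀ H')) :
    (qρ N₀ H' g : G ⧸ N₀) = QuotientGroup.mk (g : G) := rfl

lemma qρ_surj (H' : Subgroup (G ⧸ N₀)) : Function.Surjective (qρ N₀ H') := by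
  rintro ⟨x, hx⟩
  obtain ⟨w, rfl⟩ := QuotientGroup.mk_surjective x
  exact ⟨⟨w, hx⟩, rfl⟩

/-- The map on indices: `(H', K') ↦ (qH H', qρ⁻¹ K')`. -/
abbrev qτ (j : Σ H' : Subgroup (G ⧸ N₀), Subgroup ↥H') : Σ H : Subgroup G, Subgroup ↥H :=
  ⟨qH N₀ j.1, j.2.comap (qρ N₀ j.1)⟩

/-- The induced map on the subquotients. -/
def qF (j : Σ H' : Subgroup (G ⧸ N₀), Subgroup ↥H') :
    (↥(qτ N₀ j).1 ⧸ (qτ N₀ j).2) → (↥j.1 ⧸ j.2) :=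
  Quotient.map' (qρ N₀ j.1) (by
    intro a b h
    rw [QuotientGroup.leftRel_apply] at h ⊢
    have h' : qρ N₀ j.1 (a⁻¹ * b) ∈ j.2 := h
    rw [map_mul, map_inv] at h'
    exact h')

lemma qF_mk (j : Σ H' : Subgroup (G ⧸ N₀), Subgroup ↥H') (g : ↥(qτ N₀ j).1) :
    qF N₀ j (QuotientGroup.mk g) = QuotientGroup.mk (qρ N₀ j.1 g) := rfl

lemma qF_inj (j : Σ H' : Subgroup (G ⧸ N₀), Subgroup ↥H') :
    Function.Injective (qF N₀ j) := by
  intro x y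
  refine Quotient.inductionOn₂' x y fun a b => ?_
  intro h
  have h2 : (qρ N₀ j.1 a)⁻¹ * qρ N₀ j.1 b ∈ j.2 := QuotientGroup.eq.mp h
  refine QuotientGroup.eq.mpr ?_
  show qρ N₀ j.1 (a⁻¹ * b) ∈ j.2
  rw [map_mul, map_inv]
  exact h2

lemma qF_surj (j : Σ H' : Subgroup (G ⧸ N₀), Subgroup ↥H') :
    Function.Surjective (qF N₀ j) := by
  intro y
  refine Quotient.inductionOn' y fun b => ?_
  obtain ⟨a, rfl⟩ := qρ_surj N₀ j.1 b
  exact ⟨QuotientGroup.mk a, rfl⟩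

variable (l : G → ℝ)

lemma qlen_le (hl : IsLengthFunction l) (g : G) :
    qlen l N₀ (QuotientGroup.mk g) ≤ l g :=
  csInf_le ⟨0, by rintro r ⟨w, _, rfl⟩; exact hl.nonneg w⟩ ⟨g, rfl, rfl⟩

lemma qlen_approx (hl : IsLengthFunction l) (z : G ⧸ N₀) {ε : ℝ} (hε : 0 < ε) :
    ∃ w : G, (QuotientGroup.mk w : G ⧸ N₀) = z ∧ l w < qlen l N₀ z + ε := by
  obtain ⟨w₀, rfl⟩ := QuotientGroup.mk_surjective z
  obtain ⟨r, ⟨w, hw, rfl⟩, hlt⟩ :=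
    Real.lt_sInf_add_pos (s := {r : ℝ | ∃ g : G,
      (QuotientGroup.mk g : G ⧸ N₀) = QuotientGroup.mk w₀ ∧ r = l g}) ⟨l w₀, w₀, rfl, rfl⟩ hε
  exact ⟨w, hw, hlt⟩

/-- The key isometry computation. -/
lemma qF_iso (hl : IsLengthFunction l) (j : Σ H' : Subgroup (G ⧸ N₀), Subgroup ↥H')
    (x y : ↥(qτ N₀ j).1 ⧸ (qτ N₀ j).2) :
    qdist (fun h : ↥j.1 => qlen l N₀ ↑h) j.2 (qF N₀ j x) (qF N₀ j y)
      = qdist (fun h : ↥(qτ N₀ j).1 => l ↑h) (qτ N₀ j).2 x y := by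
  set S : Set ℝ := {r : ℝ | ∃ g h : ↥(qτ N₀ j).1,
    (QuotientGroup.mk g : _ ⧸ (qτ N₀ j).2) = x ∧
    (QuotientGroup.mk h : _ ⧸ (qτ N₀ j).2) = y ∧
    r = dl (fun h : ↥(qτ N₀ j).1 => l ↑h) g h} with hSdef
  set T : Set ℝ := {r : ℝ | ∃ g h : ↥j.1,
    (QuotientGroup.mk g : _ ⧸ j.2) = qF N₀ j x ∧
    (QuotientGroup.mk h : _ ⧸ j.2) = qF N₀ j y ∧
    r = dl (fun h : ↥j.1 => qlen l N₀ ↑h) g h} with hTdef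
  have hS_bdd : BddBelow S := by
    refine ⟨0, ?_⟩
    rintro r ⟨g, h, -, -, rfl⟩
    exact hl.nonneg _
  have hT_bdd : BddBelow T := by
    refine ⟨0, ?_⟩
    rintro r ⟨g, h, -, -, rfl⟩
    exact Real.sInf_nonneg (by rintro r ⟨w, -, rfl⟩; exact hl.nonneg w)
  have hS_ne : S.Nonempty := by
    obtain ⟨g, hg⟩ := QuotientGroup.mk_surjective x
    obtain ⟨h, hh⟩ := QuotientGroup.mk_surjective y
    exact ⟨_, g, h, hg, hh, rfl⟩
  -- from a point of S, a point of T below it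
  have hA : ∀ r ∈ S, ∃ t ∈ T, t ≤ r := by
    rintro r ⟨g, h, hgx, hhy, rfl⟩
    refine ⟨dl (fun h : ↥j.1 => qlen l N₀ ↑h) (qρ N₀ j.1 g) (qρ N₀ j.1 h),
      ⟨qρ N₀ j.1 g, qρ N₀ j.1 h, by rw [← hgx]; rfl, by rw [← hhy]; rfl, rfl⟩, ?_⟩
    show qlen l N₀ ↑((qρ N₀ j.1 g)⁻¹ * qρ N₀ j.1 h) ≤ l ↑(g⁻¹ * h)
    have hc : ((qρ N₀ j.1 g)⁻¹ * qρ N₀ j.1 h : ↥j.1) = qρ N₀ j.1 (g⁻¹ * h) := by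
      rw [map_mul, map_inv]
    rw [hc]
    exact qlen_le N₀ l hl _
  have hT_ne : T.Nonempty := by
    obtain ⟨r, hr⟩ := hS_ne
    obtain ⟨t, ht, -⟩ := hA r hr
    exact ⟨t, ht⟩
  show sInf T = sInf S
  refine le_antisymm (le_csInf hS_ne fun r hr => ?_) (le_csInf hT_ne fun t ht => ?_)
  · obtain ⟨t, ht, hle⟩ := hA r hr
    exact (csInf_le hT_bdd ht).trans hle
  · -- sInf S ≤ t for every t ∈ T
    by_contra hcon
    push_neg at hcon
    set ε : ℝ := (sInf S - t) / 2 with hεdef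
    have hε : 0 < ε := by simp only [hεdef]; linarith
    rcases ht with ⟨g', h', hg', hh', rfl⟩
    -- t = qlen l N₀ ↑(g'⁻¹ * h')
    obtain ⟨w, hw, hlw⟩ := qlen_approx N₀ l hl ((g'⁻¹ * h' : ↥j.1) : G ⧸ N₀) hε
    -- lift x to g with qρ g = g'
    obtain ⟨g₀, hg₀⟩ := QuotientGroup.mk_surjective x
    have h1 : (QuotientGroup.mk (qρ N₀ j.1 g₀) : ↥j.1 ⧸ j.2) = QuotientGroup.mk g' := by
      rw [← hg₀] at hg'
      exact hg'.symm
    have h2 : (qρ N₀ j.1 g₀)⁻¹ * g' ∈ j.2 := QuotientGroup.eq.mp h1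
    obtain ⟨k, hk⟩ := qρ_surj N₀ j.1 ((qρ N₀ j.1 g₀)⁻¹ * g')
    have hkK : k ∈ (qτ N₀ j).2 := by
      show qρ N₀ j.1 k ∈ j.2
      rw [hk]; exact h2
    set g : ↥(qτ N₀ j).1 := g₀ * k with hgdef
    have hgx : (QuotientGroup.mk g : _ ⧸ (qτ N₀ j).2) = x := by
      rw [← hg₀]
      refine QuotientGroup.eq.mpr ?_
      rw [hgdef]
      simpa using (qτ N₀ j).2.inv_mem hkK
    have hρg : qρ N₀ j.1 g = g' := by
      rw [hgdef, map_mul, hk, mul_inv_cancel_left]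
    have hwH : w ∈ (qτ N₀ j).1 := by
      show (QuotientGroup.mk w : G ⧸ N₀) ∈ j.1
      rw [hw]
      exact ((g'⁻¹ * h' : ↥j.1) : ↥j.1).2
    set h : ↥(qτ N₀ j).1 := g * ⟨w, hwH⟩ with hhdef
    have hρw : qρ N₀ j.1 ⟨w, hwH⟩ = g'⁻¹ * h' := by
      apply Subtype.ext
      rw [qρ_coe]
      exact hw
    have hρh : qρ N₀ j.1 h = h' := by
      rw [hhdef, map_mul, hρg, hρw, mul_inv_cancel_left]
    have hhy : (QuotientGroup.mk h : _ ⧸ (qτ N₀ j).2) = y := by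
      apply qF_inj N₀ j
      rw [qF_mk, hρh, hh']
    have hmemS : l ((g⁻¹ * h : ↥(qτ N₀ j).1) : G) ∈ S := ⟨g, h, hgx, hhy, rfl⟩
    have hval : ((g⁻¹ * h : ↥(qτ N₀ j).1) : G) = w := by
      rw [hhdef, inv_mul_cancel_left]
    have : sInf S ≤ l w := by
      rw [← hval]; exact csInf_le hS_bdd hmemS
    have ht' : qlen l N₀ ((g'⁻¹ * h' : ↥j.1) : G ⧸ N₀)
        = dl (fun h : ↥j.1 => qlen l N₀ ↑h) g' h' := rfl
    rw [ht'] at hlw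
    simp only [hεdef] at hlw
    linarith

end QuotTransfer

/-- Lemma `quotient`: stable FDC passes to quotients (with the
quotient length function). -/
theorem stableFDC_quotient {G : Type*} [Group G] [Countable G]
    (l : G → ℝ) (hl : IsLengthFunction l) (N₀ : Subgroup G) [N₀.Normal]
    (hG : StableFDC G l) : StableFDC (G ⧸ N₀) (qlen l N₀) := by
  obtain ⟨α, hα⟩ := hG
  refine ⟨α, DColl_transfer (stableD l) (stableD (qlen l N₀)) (qτ N₀) (qF N₀)
    (fun j => ⟨qF_inj N₀ j, qF_surj N₀ j⟩) (fun j x y => qF_iso N₀ l hl j x y) α _ hα _ ?_⟩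
  rintro ⟨j, Y⟩ ⟨hnorm, hY⟩
  refine ⟨hnorm.comap _, ?_⟩
  show qF N₀ j ⁻¹' Y = univ
  rw [show Y = univ from hY]
  exact Set.preimage_univ

end FDCPaper
end
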